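/- Let G=(V,E,w) be a connected weighted undirected graph, k ≥ 2 an integer, and ε ∈ (0,1). Let u* = argmin_{u∈V} H({u}) and S* = argmin_{|S|=k} H(S). Suppose S_1, S_2, ..., S_k is any sequence of vertex sets with |S_i| = i, S_i ⊆ S_{i+1}, satisfying H(S_1) ≤ (1+ε) H({u*}), and such that each greedy step is ε-approximate: for each i, the vertex u added to S_i to form S_{i+1} maximizes a function Δ'(·, S_i) that satisfies (1−ε)Δ(u,S_i) ≤ Δ'(u,S_i) ≤ (1+ε)Δ(u,S_i) for all u ∈ V∖S_i, where Δ(u,S_i) = H(S_i) − H(S_i∪{u}). Then (1+ε)H({u*}) − H(S_k) ≥ (1 − (k/(k−1))·(1/e) − ε) · ((1+ε)H({u*}) − H(S*)). -/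

import Mathlib

open Matrix BigOperators Finset

/-- Group walk centrality `H(S) = Σ_{i∈V} π_i H_{iS}`, where `HT S i = H_{iS}` is the group
hitting time of `S` from `i`. -/
noncomputable def gwcH (n : ℕ) (p : Fin n → ℝ) (HT : Finset (Fin n) → Fin n → ℝ)
    (S : Finset (Fin n)) : ℝ :=
  ∑ i, p i * HT S i

/-- Discrete minimum principle: a function superharmonic off `W` (w.r.t. the random walk
on a connected nonnegative matrix `A`) which is nonnegative on `W` is nonnegative. -/
lemma gwc_maxp (n : ℕ) (A : Matrix (Fin n) (Fin n) ℝ) (hnonneg : ∀ i j, 0 ≤ A i j)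
    (deg : Fin n → ℝ) (hdeg : ∀ i, deg i = ∑ j, A i j)
    (hconn : ∀ i j : Fin n, ∃ p : ℕ, (A ^ p) i j ≠ 0)
    (W : Finset (Fin n)) (hW : W.Nonempty)
    (g : Fin n → ℝ)
    (hsup : ∀ i ∉ W, ∑ l, (A i l / deg i) * g l ≤ g i)
    (hbd : ∀ i ∈ W, 0 ≤ g i) : ∀ i, 0 ≤ g i := by
  by_contra hcon
  push_neg at hcon
  obtain ⟨i₀, hi₀⟩ := hcon
  obtain ⟨i₁, -, hmin⟩ := Finset.exists_min_image (Finset.univ : Finset (Fin n)) g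
    ⟨i₀, Finset.mem_univ _⟩
  set m := g i₁ with hm
  have hmneg : m < 0 := lt_of_le_of_lt (hmin i₀ (Finset.mem_univ _)) hi₀
  have hmle : ∀ j, m ≤ g j := fun j => hmin j (Finset.mem_univ _)
  -- propagation along paths
  have key : ∀ p : ℕ, ∀ i j : Fin n, g i = m → (A ^ p) i j ≠ 0 → g j = m := by
    intro p
    induction p with
    | zero =>
      intro i j hgi hij
      rw [pow_zero] at hij
      by_cases h : i = j
      · rw [← h]; exact hgi
      · exact absurd (Matrix.one_apply_ne h) hij
    | succ p ih =>
      intro i j hgi hij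
      rw [pow_succ, Matrix.mul_apply] at hij
      obtain ⟨l, -, hl⟩ := Finset.exists_ne_zero_of_sum_ne_zero hij
      have h1 : (A ^ p) i l ≠ 0 := fun h => hl (by simp [h])
      have h2 : A l j ≠ 0 := fun h => hl (by simp [h])
      have hgl : g l = m := ih i l hgi h1
      have hAlj : 0 < A l j := lt_of_le_of_ne (hnonneg l j) (Ne.symm h2)
      have hdegl : 0 < deg l := by
        rw [hdeg]
        calc (0:ℝ) < A l j := hAlj
        _ ≤ ∑ t, A l t := Finset.single_le_sum (fun t _ => hnonneg l t) (Finset.mem_univ j)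
      have hlW : l ∉ W := fun h => absurd (hbd l h) (by rw [hgl]; exact not_le.mpr hmneg)
      have hsum1 : ∑ t, A l t / deg l = 1 := by
        rw [← Finset.sum_div, ← hdeg]
        exact div_self (ne_of_gt hdegl)
      -- superharmonicity forces all neighbours to value m
      have hineq : ∑ t, (A l t / deg l) * (g t - m) ≤ 0 := by
        have := hsup l hlW
        have hexp : ∑ t, (A l t / deg l) * (g t - m)
            = (∑ t, (A l t / deg l) * g t) - m := by
          simp [mul_sub, Finset.sum_sub_distrib, ← Finset.sum_mul, hsum1]
        rw [hexp, hgl] at *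
        linarith [hsup l hlW]
      have hterm : (A l j / deg l) * (g j - m) ≤ ∑ t, (A l t / deg l) * (g t - m) := by
        apply Finset.single_le_sum (f := fun t => (A l t / deg l) * (g t - m))
          (fun t _ => mul_nonneg (div_nonneg (hnonneg l t) (le_of_lt hdegl))
            (sub_nonneg.mpr (hmle t))) (Finset.mem_univ j)
      have : (A l j / deg l) * (g j - m) ≤ 0 := le_trans hterm hineq
      have hfac : 0 < A l j / deg l := div_pos hAlj hdegl
      have : g j - m ≤ 0 := by
        by_contra hgt
        push_neg at hgt
        nlinarith
      linarith [hmle j]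
  obtain ⟨w, hw⟩ := hW
  obtain ⟨p, hp⟩ := hconn i₁ w
  have : g w = m := key p i₁ w rfl hp
  have := hbd w hw
  linarith

section HT
variable (n : ℕ) (A : Matrix (Fin n) (Fin n) ℝ) (hnonneg : ∀ i j, 0 ≤ A i j)
  (deg : Fin n → ℝ) (hdeg : ∀ i, deg i = ∑ j, A i j)
  (hconn : ∀ i j : Fin n, ∃ p : ℕ, (A ^ p) i j ≠ 0)
  (HT : Finset (Fin n) → Fin n → ℝ)
  (hHT0 : ∀ W : Finset (Fin n), W.Nonempty → ∀ i ∈ W, HT W i = 0)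
  (hHTrec : ∀ W : Finset (Fin n), W.Nonempty → ∀ i, i ∉ W →
      HT W i = 1 + ∑ l, (A i l / deg i) * HT W l)

include hnonneg hdeg hconn hHT0 hHTrec

lemma HT_nonneg (W : Finset (Fin n)) (hW : W.Nonempty) : ∀ i, 0 ≤ HT W i := by
  apply gwc_maxp n A hnonneg deg hdeg hconn W hW
  · intro i hi
    have := hHTrec W hW i hi
    linarith [this]
  · intro i hi
    rw [hHT0 W hW i hi]

lemma HT_mono (W W' : Finset (Fin n)) (hW : W.Nonempty) (hsub : W ⊆ W') :
    ∀ i, HT W' i ≤ HT W i := by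
  have hW' : W'.Nonempty := hW.mono hsub
  have h := gwc_maxp n A hnonneg deg hdeg hconn W' hW'
    (fun i => HT W i - HT W' i) ?_ ?_
  · intro i; linarith [h i]
  · intro i hi
    beta_reduce
    have hiW : i ∉ W := fun h' => hi (hsub h')
    rw [hHTrec W hW i hiW, hHTrec W' hW' i hi]
    have : ∑ l, A i l / deg i * (HT W l - HT W' l)
        = (∑ l, A i l / deg i * HT W l) - ∑ l, A i l / deg i * HT W' l := by
      simp [mul_sub, Finset.sum_sub_distrib]
    rw [this]; linarith
  · intro i hi
    beta_reduce
    by_cases hiW : i ∈ W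
    · rw [hHT0 W hW i hiW, hHT0 W' hW' i hi]; norm_num
    · rw [hHT0 W' hW' i hi]
      simpa using HT_nonneg n A hnonneg deg hdeg hconn HT hHT0 hHTrec W hW i

lemma HT_supermod (S T : Finset (Fin n)) (hS : S.Nonempty) (hST : S ⊆ T)
    (u : Fin n) (hu : u ∉ T) :
    ∀ i, HT T i - HT (insert u T) i ≤ HT S i - HT (insert u S) i := by
  have hT : T.Nonempty := hS.mono hST
  have hSu : (insert u S).Nonempty := Finset.insert_nonempty _ _
  have hTu : (insert u T).Nonempty := Finset.insert_nonempty _ _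
  have h := gwc_maxp n A hnonneg deg hdeg hconn (insert u T) hTu
    (fun i => (HT S i - HT (insert u S) i) - (HT T i - HT (insert u T) i)) ?_ ?_
  · intro i; linarith [h i]
  · intro i hi
    beta_reduce
    have hiu : i ≠ u := fun h' => hi (h' ▸ Finset.mem_insert_self u T)
    have hiT : i ∉ T := fun h' => hi (Finset.mem_insert_of_mem h')
    have hiS : i ∉ S := fun h' => hiT (hST h')
    have hiSu : i ∉ insert u S := by simp [hiu, hiS]
    rw [hHTrec S hS i hiS, hHTrec (insert u S) hSu i hiSu,
      hHTrec T hT i hiT, hHTrec (insert u T) hTu i hi]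
    have : ∀ f₁ f₂ f₃ f₄ : Fin n → ℝ,
        ∑ l, A i l / deg i * ((f₁ l - f₂ l) - (f₃ l - f₄ l))
        = (∑ l, A i l / deg i * f₁ l) - (∑ l, A i l / deg i * f₂ l)
          - ((∑ l, A i l / deg i * f₃ l) - ∑ l, A i l / deg i * f₄ l) := by
      intro f₁ f₂ f₃ f₄
      simp [mul_sub, Finset.sum_sub_distrib]
    rw [this]; linarith
  · intro i hi
    beta_reduce
    rcases Finset.mem_insert.mp hi with h' | h'
    · subst h'
      rw [hHT0 (insert i S) hSu i (Finset.mem_insert_self _ _),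
        hHT0 (insert i T) hTu i (Finset.mem_insert_self _ _)]
      have := HT_mono n A hnonneg deg hdeg hconn HT hHT0 hHTrec S T hS hST i
      simpa using this
    · by_cases hiS : i ∈ S
      · rw [hHT0 S hS i hiS, hHT0 T hT i (hST hiS),
          hHT0 (insert u S) hSu i (Finset.mem_insert_of_mem hiS),
          hHT0 (insert u T) hTu i (Finset.mem_insert_of_mem h')]
        norm_num
      · rw [hHT0 T hT i h', hHT0 (insert u T) hTu i (Finset.mem_insert_of_mem h')]
        have := HT_mono n A hnonneg deg hdeg hconn HT hHT0 hHTrec S (insert u S) hS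
          (Finset.subset_insert u S) i
        simpa using this
end HT

lemma gwc_telescope {n : ℕ} (H : Finset (Fin n) → ℝ)
    (hsm : ∀ (S T : Finset (Fin n)) (u : Fin n), S.Nonempty → S ⊆ T → u ∉ T →
      H T - H (insert u T) ≤ H S - H (insert u S))
    (S : Finset (Fin n)) (hS : S.Nonempty) (T : Finset (Fin n)) :
    H S - H (S ∪ T) ≤ ∑ u ∈ T \ S, (H S - H (insert u S)) := by
  classical
  induction T using Finset.induction_on with
  | empty => simp
  | insert a T ha IH =>
    by_cases haS : a ∈ S
    · rw [Finset.union_insert, Finset.insert_eq_self.mpr (Finset.mem_union_left _ haS),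
        Finset.insert_sdiff_of_mem _ haS]
      exact IH
    · have haST : a ∉ S ∪ T := by simp [haS, ha]
      have h1 : H (S ∪ T) - H (insert a (S ∪ T)) ≤ H S - H (insert a S) :=
        hsm S (S ∪ T) a hS Finset.subset_union_left haST
      rw [Finset.union_insert, Finset.insert_sdiff_of_notMem _ haS,
        Finset.sum_insert (by simp [ha])]
      linarith

lemma gwc_numeric (k : ℕ) (hk : 2 ≤ k) (ε : ℝ) (hε0 : 0 < ε) (hε1 : ε < 1) :
    (1 - (1 - ε) / ((1 + ε) * (k : ℝ))) ^ (k - 1)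
      ≤ (k : ℝ) / ((k : ℝ) - 1) * (1 / Real.exp 1) + ε := by
  set K : ℝ := (k : ℝ) with hKdef
  have hK2 : (2 : ℝ) ≤ K := by rw [hKdef]; exact_mod_cast hk
  have hK0 : (0 : ℝ) < K := by linarith
  have hK1 : (1 : ℝ) < K := by linarith
  set r : ℝ := (1 - ε) / (1 + ε) with hrdef
  have hε1' : (0 : ℝ) < 1 + ε := by linarith
  have hr0 : 0 < r := div_pos (by linarith) hε1'
  have hr1 : r < 1 := by
    rw [hrdef, div_lt_one hε1']; linarith
  set t : ℝ := (K - 1) / K with htdef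
  have ht0 : 0 < t := div_pos (by linarith) hK0
  have ht1 : t < 1 := by rw [htdef, div_lt_one hK0]; linarith
  have hc0 : (1 - ε) / ((1 + ε) * K) = r / K := by
    rw [hrdef, div_div]
  rw [hc0]
  have hq0 : 0 ≤ 1 - r / K := by
    have : r / K ≤ 1 := by
      rw [div_le_one hK0]; linarith
    linarith
  -- step 1 : q^(k-1) ≤ exp (-(r*t))
  have hstep1 : (1 - r / K) ^ (k - 1) ≤ Real.exp (-(r * t)) := by
    have h1 : 1 - r / K ≤ Real.exp (-(r / K)) := by
      have := Real.add_one_le_exp (-(r / K)); linarith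
    calc (1 - r / K) ^ (k - 1) ≤ Real.exp (-(r / K)) ^ (k - 1) :=
          pow_le_pow_left₀ hq0 h1 _
    _ = Real.exp (((k - 1 : ℕ) : ℝ) * (-(r / K))) := (Real.exp_nat_mul _ _).symm
    _ = Real.exp (-(r * t)) := by
        congr 1
        have hcast : ((k - 1 : ℕ) : ℝ) = K - 1 := by
          rw [hKdef]; push_cast [Nat.cast_sub (by omega : 1 ≤ k)]; ring
        rw [hcast, htdef]
        ring
  -- step 2 : exp (-(r*t)) ≤ exp (-t) + ε
  have hstep2 : Real.exp (-(r * t)) ≤ Real.exp (-t) + ε := by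
    have hdecomp : Real.exp (-t) = Real.exp (-(r * t)) * Real.exp (-((1 - r) * t)) := by
      rw [← Real.exp_add]; congr 1; ring
    have he2 : 1 - Real.exp (-((1 - r) * t)) ≤ (1 - r) * t := by
      have := Real.add_one_le_exp (-((1 - r) * t)); linarith
    have hEpos : 0 < Real.exp (-(r * t)) := Real.exp_pos _
    have hmain : Real.exp (-(r * t)) * ((1 - r) * t) ≤ ε := by
      -- key: E*(1+r*t) ≤ 1
      have h1 : (1 : ℝ) + r * t ≤ Real.exp (r * t) := by
        have := Real.add_one_le_exp (r * t); linarith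
      have h2 : Real.exp (-(r * t)) * (1 + r * t) ≤ 1 := by
        rw [Real.exp_neg, inv_mul_le_iff₀ (Real.exp_pos _), mul_one]
        exact h1
      -- identities
      have hid1 : (1 - r) * (1 + ε) = 2 * ε := by
        rw [hrdef]; field_simp; ring
      have hid2 : (1 + r) * (1 + ε) = 2 := by
        rw [hrdef]; field_simp; ring
      set E := Real.exp (-(r * t)) with hE
      -- E * t * (1+r) ≤ E * (1 + r*t) ≤ 1
      have h3 : E * (t * (1 + r)) ≤ 1 := by
        have : t * (1 + r) ≤ 1 + r * t := by nlinarith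
        nlinarith
      -- multiply by (1+ε) : 2*E*t ≤ 1+ε
      have h4 : 2 * (E * t) ≤ 1 + ε := by nlinarith
      -- multiply by ε : E*(1-r)*t*(1+ε) = 2*ε*E*t ≤ ε*(1+ε)
      nlinarith
    calc Real.exp (-(r * t)) = Real.exp (-t) + Real.exp (-(r * t)) *
          (1 - Real.exp (-((1 - r) * t))) := by rw [hdecomp]; ring
    _ ≤ Real.exp (-t) + Real.exp (-(r * t)) * ((1 - r) * t) := by
        have := mul_le_mul_of_nonneg_left he2 (le_of_lt hEpos); linarith
    _ ≤ Real.exp (-t) + ε := by linarith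
  -- step 3 : exp (-t) ≤ K/(K-1) * (1/exp 1)
  have hstep3 : Real.exp (-t) ≤ K / (K - 1) * (1 / Real.exp 1) := by
    have h1 : t * Real.exp (-t) ≤ Real.exp (-1 : ℝ) := by
      have h2 : t ≤ Real.exp (t - 1) := by
        have := Real.add_one_le_exp (t - 1); linarith
      calc t * Real.exp (-t) ≤ Real.exp (t - 1) * Real.exp (-t) :=
            mul_le_mul_of_nonneg_right h2 (le_of_lt (Real.exp_pos _))
      _ = Real.exp (-1 : ℝ) := by rw [← Real.exp_add]; congr 1; ring
    have h1t : K / (K - 1) = 1 / t := by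
      rw [htdef, one_div_div]
    rw [h1t, Real.exp_neg (1 : ℝ)] at *
    rw [div_mul_eq_mul_div, one_mul, le_div_iff₀ ht0, one_div]
    calc Real.exp (-t) * t = t * Real.exp (-t) := by ring
    _ ≤ (Real.exp 1)⁻¹ := h1
  linarith

/-- Approximate greedy guarantee.  If `S_1, …, S_k` is a nested sequence with
`|S_i| = i`, `H(S_1) ≤ (1+ε) H({u*})`, and each step adds a vertex maximizing an
`ε`-approximation `Δ'` of the marginal gain `Δ(u, S_i) = H(S_i) − H(S_i ∪ {u})`, then
`(1+ε)H({u*}) − H(S_k) ≥ (1 − (k/(k−1))·(1/e) − ε) · ((1+ε)H({u*}) − H(S*))`, where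
`u* = argmin_u H({u})` and `S* = argmin_{|S|=k} H(S)`.  Group hitting times
`HT S i = H_{iS}` are characterized by vanishing on `S` and the first-step recurrence. -/
theorem approx_greedy_gwc_guarantee
    (n : ℕ) (hn : 0 < n)
    (A : Matrix (Fin n) (Fin n) ℝ)
    (hsym : A.IsSymm)
    (hnonneg : ∀ i j, 0 ≤ A i j)
    (hloop : ∀ i, A i i = 0)
    (hconn : ∀ i j : Fin n, ∃ p : ℕ, (A ^ p) i j ≠ 0)
    (deg : Fin n → ℝ) (hdeg : ∀ i, deg i = ∑ j, A i j)
    (d : ℝ) (hd : d = ∑ i, deg i)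
    (pi' : Fin n → ℝ) (hpi : ∀ i, pi' i = deg i / d)
    (HT : Finset (Fin n) → Fin n → ℝ)
    (hHT0 : ∀ W : Finset (Fin n), W.Nonempty → ∀ i ∈ W, HT W i = 0)
    (hHTrec : ∀ W : Finset (Fin n), W.Nonempty → ∀ i, i ∉ W →
      HT W i = 1 + ∑ l, (A i l / deg i) * HT W l)
    (k : ℕ) (hk : 2 ≤ k)
    (ε : ℝ) (hε0 : 0 < ε) (hε1 : ε < 1)
    (ustar : Fin n)
    (hustar : ∀ v : Fin n, gwcH n pi' HT {ustar} ≤ gwcH n pi' HT {v})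
    (Sopt : Finset (Fin n)) (hSoptcard : Sopt.card = k)
    (hSoptmin : ∀ T : Finset (Fin n), T.card = k → gwcH n pi' HT Sopt ≤ gwcH n pi' HT T)
    (Sseq : ℕ → Finset (Fin n))
    (hScard : ∀ i, 1 ≤ i → i ≤ k → (Sseq i).card = i)
    (hSmono : ∀ i, 1 ≤ i → i < k → Sseq i ⊆ Sseq (i + 1))
    (hS1 : gwcH n pi' HT (Sseq 1) ≤ (1 + ε) * gwcH n pi' HT {ustar})
    (hgreedy : ∀ i, 1 ≤ i → i < k →
      ∃ (Δ' : Fin n → ℝ) (u : Fin n), u ∉ Sseq i ∧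
        Sseq (i + 1) = insert u (Sseq i) ∧
        (∀ v, v ∉ Sseq i →
          (1 - ε) * (gwcH n pi' HT (Sseq i) - gwcH n pi' HT (insert v (Sseq i))) ≤ Δ' v ∧
          Δ' v ≤ (1 + ε) *
            (gwcH n pi' HT (Sseq i) - gwcH n pi' HT (insert v (Sseq i)))) ∧
        (∀ v, v ∉ Sseq i → Δ' v ≤ Δ' u)) :
    (1 - ((k : ℝ) / ((k : ℝ) - 1)) * (1 / Real.exp 1) - ε) *
        ((1 + ε) * gwcH n pi' HT {ustar} - gwcH n pi' HT Sopt)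
      ≤ (1 + ε) * gwcH n pi' HT {ustar} - gwcH n pi' HT (Sseq k) := by
  classical
  set Hf : Finset (Fin n) → ℝ := gwcH n pi' HT with hHf
  have hpinn : ∀ i, 0 ≤ pi' i := by
    intro i; rw [hpi i]
    apply div_nonneg
    · rw [hdeg]; exact Finset.sum_nonneg fun j _ => hnonneg i j
    · rw [hd]
      exact Finset.sum_nonneg fun j _ => by
        rw [hdeg]; exact Finset.sum_nonneg fun l _ => hnonneg j l
  have hHTnn := HT_nonneg n A hnonneg deg hdeg hconn HT hHT0 hHTrec
  have hHTmono := HT_mono n A hnonneg deg hdeg hconn HT hHT0 hHTrec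
  have hHTsm := HT_supermod n A hnonneg deg hdeg hconn HT hHT0 hHTrec
  have hHnn : ∀ W : Finset (Fin n), W.Nonempty → 0 ≤ Hf W := fun W hW =>
    Finset.sum_nonneg fun i _ => mul_nonneg (hpinn i) (hHTnn W hW i)
  have hdiffs : ∀ W W' : Finset (Fin n),
      Hf W - Hf W' = ∑ i, pi' i * (HT W i - HT W' i) := by
    intro W W'
    simp [hHf, gwcH, mul_sub, Finset.sum_sub_distrib]
  have hHmono : ∀ W W' : Finset (Fin n), W.Nonempty → W ⊆ W' → Hf W' ≤ Hf W := by
    intro W W' hW hsub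
    exact Finset.sum_le_sum fun i _ =>
      mul_le_mul_of_nonneg_left (hHTmono W W' hW hsub i) (hpinn i)
  have hHsm : ∀ (S T : Finset (Fin n)) (u : Fin n), S.Nonempty → S ⊆ T → u ∉ T →
      Hf T - Hf (insert u T) ≤ Hf S - Hf (insert u S) := by
    intro S T u hS hST hu
    rw [hdiffs, hdiffs]
    exact Finset.sum_le_sum fun i _ =>
      mul_le_mul_of_nonneg_left (hHTsm S T hS hST u hu i) (hpinn i)
  have hkn : k ≤ n := by
    have := Finset.card_le_univ Sopt
    rwa [hSoptcard, Fintype.card_fin] at this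
  have hextend : ∀ S : Finset (Fin n), S.card ≤ k → ∃ T, S ⊆ T ∧ T.card = k := by
    intro S hS
    obtain ⟨T, h1, _, h3⟩ := Finset.exists_subsuperset_card_eq (Finset.subset_univ S) hS
      (by rw [Finset.card_univ, Fintype.card_fin]; exact hkn)
    exact ⟨T, h1, h3⟩
  have hSoptne : Sopt.Nonempty := Finset.card_pos.mp (by rw [hSoptcard]; omega)
  have hopt_le : ∀ S : Finset (Fin n), S.Nonempty → S.card ≤ k → Hf Sopt ≤ Hf S := by
    intro S hSneS hSk
    obtain ⟨T, hST, hTk⟩ := hextend S hSk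
    exact le_trans (hSoptmin T hTk) (hHmono S T hSneS hST)
  have hune : ({ustar} : Finset (Fin n)).Nonempty := Finset.singleton_nonempty _
  have hHu0 : 0 ≤ Hf {ustar} := hHnn _ hune
  set astar : ℝ := (1 + ε) * Hf {ustar} - Hf Sopt with hastar
  have hastar0 : 0 ≤ astar := by
    have h1 : Hf Sopt ≤ Hf {ustar} :=
      hopt_le {ustar} hune (by rw [Finset.card_singleton]; omega)
    rw [hastar]; nlinarith
  have hK0 : (0:ℝ) < (k:ℝ) := by exact_mod_cast (by omega : 0 < k)
  have hK2 : (2:ℝ) ≤ (k:ℝ) := by exact_mod_cast hk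
  set c₀ : ℝ := (1 - ε) / ((1 + ε) * (k:ℝ)) with hc₀
  have hden : (0:ℝ) < (1 + ε) * (k:ℝ) := by positivity
  have hc₀0 : 0 < c₀ := div_pos (by linarith) hden
  have hSne : ∀ j, 1 ≤ j → j ≤ k → (Sseq j).Nonempty := fun j h1 h2 =>
    Finset.card_pos.mp (by rw [hScard j h1 h2]; omega)
  -- the per-step greedy inequality
  have hstep : ∀ i, 1 ≤ i → i < k →
      c₀ * (Hf (Sseq i) - Hf Sopt) ≤ Hf (Sseq i) - Hf (Sseq (i+1)) := by
    intro i h1 h2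
    obtain ⟨Δ', u, huS, hins, hbnd, hmax⟩ := hgreedy i h1 h2
    have hSine : (Sseq i).Nonempty := hSne i h1 (le_of_lt h2)
    have hDu : 0 ≤ Hf (Sseq i) - Hf (insert u (Sseq i)) := by
      have := hHmono (Sseq i) (insert u (Sseq i)) hSine (Finset.subset_insert _ _)
      linarith
    have htel := gwc_telescope Hf hHsm (Sseq i) hSine Sopt
    have hM : Hf (Sseq i ∪ Sopt) ≤ Hf Sopt :=
      hHmono Sopt (Sseq i ∪ Sopt) hSoptne Finset.subset_union_right
    have h3 : Hf (Sseq i) - Hf Sopt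
        ≤ ∑ v ∈ Sopt \ Sseq i, (Hf (Sseq i) - Hf (insert v (Sseq i))) := by
      linarith
    have hbound0 : 0 ≤ (1 + ε) * (Hf (Sseq i) - Hf (insert u (Sseq i))) :=
      mul_nonneg (by linarith) hDu
    have hterm : ∀ v ∈ Sopt \ Sseq i,
        (1 - ε) * (Hf (Sseq i) - Hf (insert v (Sseq i)))
          ≤ (1 + ε) * (Hf (Sseq i) - Hf (insert u (Sseq i))) := by
      intro v hv
      have hvS : v ∉ Sseq i := (Finset.mem_sdiff.mp hv).2
      obtain ⟨hl, _⟩ := hbnd v hvS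
      obtain ⟨_, hru⟩ := hbnd u huS
      have := hmax v hvS
      linarith
    have h5 := Finset.sum_le_card_nsmul (Sopt \ Sseq i) _ _ hterm
    rw [nsmul_eq_mul] at h5
    have hcard : (((Sopt \ Sseq i).card : ℕ) : ℝ) ≤ (k:ℝ) := by
      have := Finset.card_le_card (Finset.sdiff_subset (s := Sopt) (t := Sseq i))
      rw [hSoptcard] at this
      exact_mod_cast this
    have hsum : (1 - ε) * (Hf (Sseq i) - Hf Sopt)
        ≤ (k:ℝ) * ((1 + ε) * (Hf (Sseq i) - Hf (insert u (Sseq i)))) := by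
      calc (1 - ε) * (Hf (Sseq i) - Hf Sopt)
          ≤ (1 - ε) * ∑ v ∈ Sopt \ Sseq i, (Hf (Sseq i) - Hf (insert v (Sseq i))) :=
            mul_le_mul_of_nonneg_left h3 (by linarith)
        _ = ∑ v ∈ Sopt \ Sseq i, (1 - ε) * (Hf (Sseq i) - Hf (insert v (Sseq i))) :=
            Finset.mul_sum _ _ _
        _ ≤ ((Sopt \ Sseq i).card : ℝ)
              * ((1 + ε) * (Hf (Sseq i) - Hf (insert u (Sseq i)))) := h5
        _ ≤ (k:ℝ) * ((1 + ε) * (Hf (Sseq i) - Hf (insert u (Sseq i)))) :=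
            mul_le_mul_of_nonneg_right hcard hbound0
    rw [hins, hc₀, div_mul_eq_mul_div, div_le_iff₀ hden]
    have hring : (k:ℝ) * ((1 + ε) * (Hf (Sseq i) - Hf (insert u (Sseq i))))
        = (Hf (Sseq i) - Hf (insert u (Sseq i))) * ((1 + ε) * (k:ℝ)) := by ring
    linarith [hsum, hring.symm.le, hring.le]
  -- geometric recursion
  set q : ℝ := 1 - c₀ with hq
  have hq0 : 0 ≤ q := by
    have : c₀ ≤ 1 := by
      rw [hc₀, div_le_one hden]; nlinarith
    rw [hq]; linarith
  have hrec : ∀ m : ℕ, 1 + m ≤ k →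
      Hf (Sseq (1+m)) - Hf Sopt ≤ q ^ m * (Hf (Sseq 1) - Hf Sopt) := by
    intro m
    induction m with
    | zero => intro _; simp
    | succ m ih =>
      intro hmk
      have h1 : 1 ≤ 1 + m := by omega
      have h2 : 1 + m < k := by omega
      have hs := hstep (1+m) h1 h2
      have ihh := ih (by omega)
      have hone : Hf (Sseq (1+m+1)) - Hf Sopt ≤ q * (Hf (Sseq (1+m)) - Hf Sopt) := by
        rw [hq]
        nlinarith [hs]
      have heq : 1 + (m+1) = (1+m) + 1 := by omega
      calc Hf (Sseq (1+(m+1))) - Hf Sopt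
          ≤ q * (Hf (Sseq (1+m)) - Hf Sopt) := by rw [heq]; exact hone
        _ ≤ q * (q ^ m * (Hf (Sseq 1) - Hf Sopt)) := mul_le_mul_of_nonneg_left ihh hq0
        _ = q ^ (m+1) * (Hf (Sseq 1) - Hf Sopt) := by ring
  have hbk : Hf (Sseq k) - Hf Sopt ≤ q ^ (k-1) * astar := by
    have h0 := hrec (k-1) (by omega)
    have hkk : 1 + (k-1) = k := by omega
    rw [hkk] at h0
    have hb1 : Hf (Sseq 1) - Hf Sopt ≤ astar := by
      rw [hastar]; linarith [hS1]
    have := mul_le_mul_of_nonneg_left hb1 (pow_nonneg hq0 (k-1))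
    linarith
  have hnum := gwc_numeric k hk ε hε0 hε1
  have hnum' : q ^ (k-1) ≤ (k : ℝ) / ((k : ℝ) - 1) * (1 / Real.exp 1) + ε := by
    rw [hq, hc₀]; exact hnum
  have h7 : q ^ (k-1) * astar
      ≤ ((k : ℝ) / ((k : ℝ) - 1) * (1 / Real.exp 1) + ε) * astar :=
    mul_le_mul_of_nonneg_right hnum' hastar0
  have h8 : Hf (Sseq k) - Hf Sopt
      ≤ ((k : ℝ) / ((k : ℝ) - 1) * (1 / Real.exp 1) + ε) * astar := le_trans hbk h7
  have hfin : (1 - ((k : ℝ) / ((k : ℝ) - 1)) * (1 / Real.exp 1) - ε) * astar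
      ≤ astar - (Hf (Sseq k) - Hf Sopt) := by
    have hexp : (1 - ((k : ℝ) / ((k : ℝ) - 1)) * (1 / Real.exp 1) - ε) * astar
        = astar - ((k : ℝ) / ((k : ℝ) - 1) * (1 / Real.exp 1) + ε) * astar := by ring
    rw [hexp]
    linarith
  rw [hastar] at hfin
  linarith
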